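/- Let A0 be the 7×7 Jacobian matrix [∂(t5·R_i)/∂t_j], i,j = 0,...,6, of the numerators of the Ramanujan-type system R, evaluated at the point T0 = (1/5, −25, −35, −6, 0, −1, −15). Then for every integer n ≥ 2 the matrix A0 + 5n·I (I the 7×7 identity) is invertible; consequently the formal power series solution h_i = Σ_{n≥0} t_{i,n} q^n of R (with ṫ = 5q d/dq) is uniquely determined by the initial data T0 and T1 = (24, −2250, −5350, −355, 1, 1875, 4675). -/

import Mathlib

open PowerSeries

/-- The polynomial numerators Pᵢ of the Ramanujan-type system `t5·ṫᵢ = Pᵢ(t)`. -/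
def P {R : Type*} [CommRing R] (t : Fin 7 → R) : Fin 7 → R :=
  ![6*5^4*(t 0)^5 + t 0*t 3 - 5^4*t 4,
    -(5^8)*(t 0)^6 + 5^5*(t 0)^4*t 1 + 5^8*t 0*t 4 + t 1*t 3,
    -(3*5^9)*(t 0)^7 - 5^4*(t 0)^5*t 1 + 2*5^5*(t 0)^4*t 2 + 3*5^9*(t 0)^2*t 4
      + 5^4*t 1*t 4 + 2*t 2*t 3,
    -(5^10)*(t 0)^8 - 5^4*(t 0)^5*t 2 + 3*5^5*(t 0)^4*t 3 + 5^10*(t 0)^3*t 4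
      + 5^4*t 2*t 4 + 3*(t 3)^2,
    5^6*(t 0)^4*t 4 + 5*t 3*t 4,
    -(5^4)*(t 0)^5*t 6 + 3*5^5*(t 0)^4*t 5 + 2*t 3*t 5 + 5^4*t 4*t 6,
    3*5^5*(t 0)^4*t 6 - 5^5*(t 0)^3*t 5 - 2*t 2*t 5 + 3*t 3*t 6]

/-- Initial coefficients T₀. -/
noncomputable def T0 : Fin 7 → ℂ := ![1/5, -25, -35, -6, 0, -1, -15]

/-- Initial coefficients T₁. -/
noncomputable def T1 : Fin 7 → ℂ := ![24, -2250, -5350, -355, 1, 1875, 4675]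

/-- The Jacobian matrix A₀ = [∂Pᵢ/∂tⱼ] evaluated at T₀. -/
noncomputable def A0 : Matrix (Fin 7) (Fin 7) ℂ :=
  fun i j => deriv (fun s : ℂ => P (Function.update T0 j s) i) (T0 j)

/-- The derivation ṫ = 5·q·d/dq on formal power series in q. -/
noncomputable def Dq (f : PowerSeries ℂ) : PowerSeries ℂ :=
  PowerSeries.mk fun n => 5 * (n : ℂ) * PowerSeries.coeff n f

/-- A formal power series solution of the system `t5·ṫᵢ = Pᵢ(t)`. -/
def IsSol (h : Fin 7 → PowerSeries ℂ) : Prop :=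
  ∀ i : Fin 7, h 5 * Dq (h i) = P h i


section Aux

lemma vec7_0 {α : Type*} (a b c d e f g : α) : ![a,b,c,d,e,f,g] 0 = a := rfl
lemma vec7_1 {α : Type*} (a b c d e f g : α) : ![a,b,c,d,e,f,g] 1 = b := rfl
lemma vec7_2 {α : Type*} (a b c d e f g : α) : ![a,b,c,d,e,f,g] 2 = c := rfl
lemma vec7_3 {α : Type*} (a b c d e f g : α) : ![a,b,c,d,e,f,g] 3 = d := rfl
lemma vec7_4 {α : Type*} (a b c d e f g : α) : ![a,b,c,d,e,f,g] 4 = e := rfl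
lemma vec7_5 {α : Type*} (a b c d e f g : α) : ![a,b,c,d,e,f,g] 5 = f := rfl
lemma vec7_6 {α : Type*} (a b c d e f g : α) : ![a,b,c,d,e,f,g] 6 = g := rfl
lemma vec7_0' {α : Type*} (a b c d e f g : α) (h : 0 < 7) : ![a,b,c,d,e,f,g] ⟨0,h⟩ = a := rfl
lemma vec7_1' {α : Type*} (a b c d e f g : α) (h : 1 < 7) : ![a,b,c,d,e,f,g] ⟨1,h⟩ = b := rfl
lemma vec7_2' {α : Type*} (a b c d e f g : α) (h : 2 < 7) : ![a,b,c,d,e,f,g] ⟨2,h⟩ = c := rfl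
lemma vec7_3' {α : Type*} (a b c d e f g : α) (h : 3 < 7) : ![a,b,c,d,e,f,g] ⟨3,h⟩ = d := rfl
lemma vec7_4' {α : Type*} (a b c d e f g : α) (h : 4 < 7) : ![a,b,c,d,e,f,g] ⟨4,h⟩ = e := rfl
lemma vec7_5' {α : Type*} (a b c d e f g : α) (h : 5 < 7) : ![a,b,c,d,e,f,g] ⟨5,h⟩ = f := rfl
lemma vec7_6' {α : Type*} (a b c d e f g : α) (h : 6 < 7) : ![a,b,c,d,e,f,g] ⟨6,h⟩ = g := rfl

lemma fmk0 (h : 0 < 7) : (⟨0, h⟩ : Fin 7) = 0 := rfl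
lemma fmk1 (h : 1 < 7) : (⟨1, h⟩ : Fin 7) = 1 := rfl
lemma fmk2 (h : 2 < 7) : (⟨2, h⟩ : Fin 7) = 2 := rfl
lemma fmk3 (h : 3 < 7) : (⟨3, h⟩ : Fin 7) = 3 := rfl
lemma fmk4 (h : 4 < 7) : (⟨4, h⟩ : Fin 7) = 4 := rfl
lemma fmk5 (h : 5 < 7) : (⟨5, h⟩ : Fin 7) = 5 := rfl
lemma fmk6 (h : 6 < 7) : (⟨6, h⟩ : Fin 7) = 6 := rfl

lemma dcm (c x : ℂ) : deriv (HMul.hMul c) x = c := by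
  have := deriv_const_mul_field (𝕜 := ℂ) (v := fun s : ℂ => s) (x := x) c
  simpa using this

noncomputable def Mmat : Matrix (Fin 7) (Fin 7) ℂ := fun i j =>
  ![
    ![(24:ℂ), (0:ℂ), (0:ℂ), (1/5:ℂ), (-625:ℂ), (0:ℂ), (0:ℂ)],
    ![(-3250:ℂ), (-1:ℂ), (0:ℂ), (-25:ℂ), (78125:ℂ), (0:ℂ), (0:ℂ)],
    ![(-9500:ℂ), (-1/5:ℂ), (-2:ℂ), (-70:ℂ), (218750:ℂ), (0:ℂ), (0:ℂ)],
    ![(-2625:ℂ), (0:ℂ), (-1/5:ℂ), (-21:ℂ), (56250:ℂ), (0:ℂ), (0:ℂ)],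
    ![(0:ℂ), (0:ℂ), (0:ℂ), (0:ℂ), (-5:ℂ), (0:ℂ), (0:ℂ)],
    ![(-225:ℂ), (0:ℂ), (0:ℂ), (-2:ℂ), (-9375:ℂ), (3:ℂ), (-1/5:ℂ)],
    ![(-4125:ℂ), (0:ℂ), (2:ℂ), (-45:ℂ), (0:ℂ), (45:ℂ), (-3:ℂ)]] i j


set_option maxHeartbeats 2000000 in
lemma A0_eq : A0 = Mmat := by
  ext i j
  fin_cases i <;> fin_cases j <;>
    (simp only [A0, Mmat, P, vec7_0, vec7_1, vec7_2, vec7_3, vec7_4, vec7_5, vec7_6,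
        vec7_0', vec7_1', vec7_2', vec7_3', vec7_4', vec7_5', vec7_6',
        fmk0, fmk1, fmk2, fmk3, fmk4, fmk5, fmk6]
     <;> simp (disch := fun_prop) [T0, Function.update,
      vec7_0, vec7_1, vec7_2, vec7_3, vec7_4, vec7_5, vec7_6, dcm,
      deriv_add, deriv_mul, deriv_sub, deriv_pow, deriv_const_mul_field'] <;> try norm_num)

noncomputable def Adj (x : ℂ) : Matrix (Fin 7) (Fin 7) ℂ := fun i j =>
  ![
    ![((145)*x^2 + (-284)*x^3 + (171)*x^4 + (-29)*x^5 + x^6:ℂ), ((1/25)*x^2 + (-1/125)*x^3:ℂ), ((-1/5)*x^2 + (6/25)*x^3 + (-1/25)*x^4:ℂ), ((2)*x^2 + (-17/5)*x^3 + (8/5)*x^4 + (-1/5)*x^5:ℂ), ((-3750)*x^2 + (6875)*x^3 + (-3750)*x^4 + (625)*x^5:ℂ), (0:ℂ), (0:ℂ)],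
    ![((-36250)*x^2 + (52875)*x^3 + (-25375)*x^4 + (3250)*x^5:ℂ), ((-10)*x^2 + (-3)*x^3 + (-4)*x^4 + (-4)*x^5 + x^6:ℂ), ((50)*x^2 + (-35)*x^3 + (5)*x^4:ℂ), ((-500)*x^2 + (600)*x^3 + (-225)*x^4 + (25)*x^5:ℂ), ((937500)*x^2 + (-1250000)*x^3 + (546875)*x^4 + (-78125)*x^5:ℂ), (0:ℂ), (0:ℂ)],
    ![((-76125)*x^2 + (138225)*x^3 + (-72100)*x^4 + (9500)*x^5:ℂ), ((-21)*x^2 + (6/5)*x^3 + (-2/5)*x^4 + (1/5)*x^5:ℂ), ((105)*x^2 + (-111)*x^3 + (8)*x^4 + (-3)*x^5 + x^6:ℂ), ((-1050)*x^2 + (1635)*x^3 + (-635)*x^4 + (70)*x^5:ℂ), ((1968750)*x^2 + (-3328125)*x^3 + (1546875)*x^4 + (-218750)*x^5:ℂ), (0:ℂ), (0:ℂ)],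
    ![((-17400)*x^2 + (33355)*x^3 + (-19100)*x^4 + (2625)*x^5:ℂ), ((-24/5)*x^2 + (19/25)*x^3 + (1/25)*x^4:ℂ), ((24)*x^2 + (-139/5)*x^3 + (18/5)*x^4 + (1/5)*x^5:ℂ), ((-240)*x^2 + (398)*x^3 + (-175)*x^4 + (16)*x^5 + x^6:ℂ), ((450000)*x^2 + (-806250)*x^3 + (415625)*x^4 + (-56250)*x^5:ℂ), (0:ℂ), (0:ℂ)],
    ![(0:ℂ), (0:ℂ), (0:ℂ), (0:ℂ), (x^6:ℂ), (0:ℂ), (0:ℂ)],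
    ![((-1125)*x^4 + (225)*x^5:ℂ), (0:ℂ), (0:ℂ), ((-10)*x^4 + (2)*x^5:ℂ), ((9375)*x^5:ℂ), ((15)*x^4 + (-8)*x^5 + x^6:ℂ), (-x^4 + (1/5)*x^5:ℂ)],
    ![((10875)*x^2 + (-14050)*x^3 + (-18250)*x^4 + (4125)*x^5:ℂ), ((3)*x^2 + (7/5)*x^3 + (-2/5)*x^4:ℂ), ((-15)*x^2 + (8)*x^3 + (9)*x^4 + (-2)*x^5:ℂ), ((150)*x^2 + (-155)*x^3 + (-200)*x^4 + (45)*x^5:ℂ), ((-281250)*x^2 + (328125)*x^3 + (62500)*x^4:ℂ), ((225)*x^4 + (-45)*x^5:ℂ), ((-15)*x^4 + (-2)*x^5 + x^6:ℂ)]] i j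


set_option maxHeartbeats 2000000 in
lemma key_adj (x : ℂ) : (Mmat + x • (1 : Matrix (Fin 7) (Fin 7) ℂ)) * Adj x
    = (x^6*(x-5)) • (1 : Matrix (Fin 7) (Fin 7) ℂ) := by
  ext i j
  fin_cases i <;> fin_cases j <;>
    (simp only [Matrix.mul_apply, Fin.sum_univ_seven, Matrix.add_apply, Matrix.smul_apply,
      Matrix.one_apply, Mmat, Adj, smul_eq_mul,
      vec7_0, vec7_1, vec7_2, vec7_3, vec7_4, vec7_5, vec7_6,
      vec7_0', vec7_1', vec7_2', vec7_3', vec7_4', vec7_5', vec7_6']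
     <;> simp (config := { decide := true }) [Fin.mk.injEq] <;> ring)

lemma part1 : ∀ n : ℕ, 2 ≤ n →
    IsUnit (A0 + (5*(n : ℂ)) • (1 : Matrix (Fin 7) (Fin 7) ℂ)) := by
  intro n hn
  rw [A0_eq]
  have hne : ((5*(n:ℂ))^6 * ((5*(n:ℂ)) - 5)) ≠ 0 := by
    have h1 : (n:ℂ) ≠ 0 := by
      exact_mod_cast Nat.cast_ne_zero.mpr (by omega)
    have h2 : (n:ℂ) ≠ 1 := by
      intro hc
      have : ((n:ℂ)) = ((1:ℕ):ℂ) := by simpa using hc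
      have := Nat.cast_injective (R := ℂ) this
      omega
    have h3 : (5*(n:ℂ)) ≠ 0 := mul_ne_zero (by norm_num) h1
    have h4 : (5*(n:ℂ)) - 5 ≠ 0 := by
      intro hc
      apply h2
      have : (5:ℂ) * n = 5 * 1 := by linear_combination hc
      exact mul_left_cancel₀ (by norm_num : (5:ℂ) ≠ 0) this
    exact mul_ne_zero (pow_ne_zero _ h3) h4
  apply IsUnit.of_mul_eq_one
    (b := (((5*(n:ℂ))^6 * ((5*(n:ℂ)) - 5))⁻¹) • Adj (5*(n:ℂ)))
  rw [Matrix.mul_smul, key_adj, smul_smul, inv_mul_cancel₀ hne, one_smul]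

-- Part 2 machinery

lemma coeff_mul_vanish_right (n : ℕ) (a c : PowerSeries ℂ)
    (hc : ∀ k, k < n → coeff k c = 0) :
    coeff n (a * c) = constantCoeff a * coeff n c := by
  rw [PowerSeries.coeff_mul, Finset.sum_eq_single ((0 : ℕ), n)]
  · rw [PowerSeries.coeff_zero_eq_constantCoeff]
  · rintro ⟨p, q⟩ hmem hne
    rw [Finset.HasAntidiagonal.mem_antidiagonal] at hmem
    have hq : q < n := by
      rcases lt_or_eq_of_le (show q ≤ n by omega) with h | h
      · exact h
      · exfalso; apply hne; simp only [Prod.mk.injEq]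
        constructor <;> omega
    rw [hc q hq, mul_zero]
  · intro hnot
    exact absurd (Finset.HasAntidiagonal.mem_antidiagonal.mpr (by omega)) hnot

lemma coeff_mul_vanish_left (n : ℕ) (a c : PowerSeries ℂ)
    (hc : ∀ k, k < n → coeff k c = 0) :
    coeff n (c * a) = coeff n c * constantCoeff a := by
  rw [mul_comm, coeff_mul_vanish_right n a c hc, mul_comm]

lemma key_mul (n : ℕ) (hn : 0 < n) (a a' b b' : PowerSeries ℂ)
    (ha : ∀ j, j < n → coeff j a = coeff j a')
    (hb : ∀ j, j < n → coeff j b = coeff j b') :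
    coeff n (a * b) - coeff n (a' * b') =
      constantCoeff a * (coeff n b - coeff n b')
        + (coeff n a - coeff n a') * constantCoeff b := by
  have h2 := congrArg (fun f => coeff n f)
    (show a * b - a' * b' = a * (b - b') + (a - a') * b' by ring)
  simp only [map_sub, map_add] at h2
  rw [coeff_mul_vanish_right n a (b - b')
      (fun k hk => by rw [map_sub, hb k hk, sub_self]),
    coeff_mul_vanish_left n b' (a - a')
      (fun k hk => by rw [map_sub, ha k hk, sub_self])] at h2
  have hb0 : constantCoeff b' = constantCoeff b := by
    rw [← PowerSeries.coeff_zero_eq_constantCoeff_apply,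
      ← PowerSeries.coeff_zero_eq_constantCoeff_apply, hb 0 hn]
  rw [hb0] at h2
  simp only [map_sub] at h2
  linear_combination h2

lemma ag_mul (n : ℕ) (x x' y y' : PowerSeries ℂ)
    (hx : ∀ j, j < n → coeff j x = coeff j x')
    (hy : ∀ j, j < n → coeff j y = coeff j y') :
    ∀ j, j < n → coeff j (x * y) = coeff j (x' * y') := by
  intro j hj
  rw [PowerSeries.coeff_mul, PowerSeries.coeff_mul]
  apply Finset.sum_congr rfl
  rintro ⟨p, q⟩ hp
  rw [Finset.HasAntidiagonal.mem_antidiagonal] at hp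
  rw [hx p (by omega), hy q (by omega)]

lemma ag_pow (n : ℕ) (x x' : PowerSeries ℂ)
    (hx : ∀ j, j < n → coeff j x = coeff j x') (m : ℕ) :
    ∀ j, j < n → coeff j (x ^ m) = coeff j (x' ^ m) := by
  induction m with
  | zero => intro j hj; simp
  | succ m ih =>
    intro j hj
    rw [pow_succ, pow_succ]
    exact ag_mul n _ _ _ _ ih hx j hj

lemma key_pow (n : ℕ) (hn : 0 < n) (x x' : PowerSeries ℂ)
    (hx : ∀ j, j < n → coeff j x = coeff j x') (k : ℕ) :
    coeff n (x ^ (k+1)) - coeff n (x' ^ (k+1))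
      = (k+1) * (constantCoeff x) ^ k * (coeff n x - coeff n x') := by
  induction k with
  | zero => simp
  | succ k ih =>
    have hmul := key_mul n hn (x ^ (k+1)) (x' ^ (k+1)) x x'
      (ag_pow n x x' hx (k+1)) hx
    simp only [map_pow] at hmul
    rw [pow_succ x (k+1), pow_succ x' (k+1)]
    push_cast
    push_cast at ih
    linear_combination hmul + (constantCoeff x) * ih

lemma numfacts (n : ℕ) (hn : n ≠ 0) (γ : PowerSeries ℂ) (c : ℂ) (m : ℤ)
    (h1 : γ = ((m : ℤ) : PowerSeries ℂ)) (h2 : ((m : ℤ) : ℂ) = c) :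
    coeff n γ = 0 ∧ constantCoeff γ = c := by
  subst h1
  rw [← map_intCast (PowerSeries.C (R := ℂ)) m]
  constructor
  · rw [PowerSeries.coeff_C]; simp [hn]
  · rw [PowerSeries.constantCoeff_C]; exact h2

lemma monoE (n : ℕ) (hn : 0 < n) (γ x x' : PowerSeries ℂ) (cγ : ℂ)
    (hγn : coeff n γ = 0) (hγc : constantCoeff γ = cγ)
    (hx : ∀ j, j < n → coeff j x = coeff j x') :
    coeff n (γ * x) - coeff n (γ * x') = cγ * (coeff n x - coeff n x') := by
  have := key_mul n hn γ γ x x' (fun j _ => rfl) hx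
  rw [hγc] at this
  linear_combination this

lemma monoA (n : ℕ) (hn : 0 < n) (γ x x' : PowerSeries ℂ) (cγ cx : ℂ) (k m : ℕ)
    (hm : m = k + 1) (hγn : coeff n γ = 0) (hγc : constantCoeff γ = cγ)
    (hxc : constantCoeff x = cx)
    (hx : ∀ j, j < n → coeff j x = coeff j x') :
    coeff n (γ * x ^ m) - coeff n (γ * x' ^ m)
      = cγ * m * cx ^ k * (coeff n x - coeff n x') := by
  subst hm
  have h1 := monoE n hn γ (x ^ (k+1)) (x' ^ (k+1)) cγ hγn hγc (ag_pow n x x' hx (k+1))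
  have h2 := key_pow n hn x x' hx k
  rw [hxc] at h2
  rw [h1, h2]
  push_cast
  ring

lemma monoD (n : ℕ) (hn : 0 < n) (x x' y y' : PowerSeries ℂ) (cx cy : ℂ)
    (hxc : constantCoeff x = cx) (hyc : constantCoeff y = cy)
    (hx : ∀ j, j < n → coeff j x = coeff j x')
    (hy : ∀ j, j < n → coeff j y = coeff j y') :
    coeff n (x * y) - coeff n (x' * y')
      = cx * (coeff n y - coeff n y') + cy * (coeff n x - coeff n x') := by
  have := key_mul n hn x x' y y' hx hy
  rw [hxc, hyc] at this
  linear_combination this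

lemma monoC (n : ℕ) (hn : 0 < n) (γ x x' y y' : PowerSeries ℂ) (cγ cx cy : ℂ)
    (hγn : coeff n γ = 0) (hγc : constantCoeff γ = cγ)
    (hxc : constantCoeff x = cx) (hyc : constantCoeff y = cy)
    (hx : ∀ j, j < n → coeff j x = coeff j x')
    (hy : ∀ j, j < n → coeff j y = coeff j y') :
    coeff n (γ * x * y) - coeff n (γ * x' * y')
      = cγ * (cx * (coeff n y - coeff n y') + cy * (coeff n x - coeff n x')) := by
  have h1 := key_mul n hn (γ * x) (γ * x') y y'
    (ag_mul n γ γ x x' (fun j _ => rfl) hx) hy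
  have h2 := monoE n hn γ x x' cγ hγn hγc hx
  simp only [map_mul] at h1
  rw [hγc, hxc, hyc] at h1
  linear_combination h1 + cy * h2

lemma monoB (n : ℕ) (hn : 0 < n) (γ x x' y y' : PowerSeries ℂ) (cγ cx cy : ℂ) (k m : ℕ)
    (hm : m = k + 1) (hγn : coeff n γ = 0) (hγc : constantCoeff γ = cγ)
    (hxc : constantCoeff x = cx) (hyc : constantCoeff y = cy)
    (hx : ∀ j, j < n → coeff j x = coeff j x')
    (hy : ∀ j, j < n → coeff j y = coeff j y') :
    coeff n (γ * x ^ m * y) - coeff n (γ * x' ^ m * y')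
      = cγ * (cx ^ m * (coeff n y - coeff n y')
          + m * cx ^ k * cy * (coeff n x - coeff n x')) := by
  have h1 := key_mul n hn (γ * x ^ m) (γ * x' ^ m) y y'
    (ag_mul n γ γ (x ^ m) (x' ^ m) (fun j _ => rfl) (ag_pow n x x' hx m)) hy
  have h2 := monoA n hn γ x x' cγ cx k m hm hγn hγc hxc hx
  simp only [map_mul, map_pow] at h1
  rw [hγc, hxc, hyc] at h1
  linear_combination h1 + cy * h2

lemma coeff_Dq (k : ℕ) (f : PowerSeries ℂ) :
    coeff k (Dq f) = 5 * (k : ℂ) * coeff k f := by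
  simp [Dq, PowerSeries.coeff_mk]

lemma step (n : ℕ) (hn : 2 ≤ n) (h h' : Fin 7 → PowerSeries ℂ)
    (hs : IsSol h) (hs' : IsSol h')
    (h0 : ∀ i, PowerSeries.coeff 0 (h i) = T0 i)
    (h0' : ∀ i, PowerSeries.coeff 0 (h' i) = T0 i)
    (hag : ∀ j, ∀ k, k < n → coeff k (h j) = coeff k (h' j)) :
    ∀ j, coeff n (h j) = coeff n (h' j) := by
  have hn0 : 0 < n := by omega
  have hcv0 : constantCoeff (h 0) = 1/5 := by
    rw [← PowerSeries.coeff_zero_eq_constantCoeff_apply, h0 0]; rfl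
  have hcv1 : constantCoeff (h 1) = -25 := by
    rw [← PowerSeries.coeff_zero_eq_constantCoeff_apply, h0 1]; rfl
  have hcv2 : constantCoeff (h 2) = -35 := by
    rw [← PowerSeries.coeff_zero_eq_constantCoeff_apply, h0 2]; rfl
  have hcv3 : constantCoeff (h 3) = -6 := by
    rw [← PowerSeries.coeff_zero_eq_constantCoeff_apply, h0 3]; rfl
  have hcv4 : constantCoeff (h 4) = 0 := by
    rw [← PowerSeries.coeff_zero_eq_constantCoeff_apply, h0 4]; rfl
  have hcv5 : constantCoeff (h 5) = -1 := by
    rw [← PowerSeries.coeff_zero_eq_constantCoeff_apply, h0 5]; rfl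
  have hcv6 : constantCoeff (h 6) = -15 := by
    rw [← PowerSeries.coeff_zero_eq_constantCoeff_apply, h0 6]; rfl
  have hl : ∀ i, coeff n (h 5 * Dq (h i)) - coeff n (h' 5 * Dq (h' i))
      = -(5*(n:ℂ)) * (coeff n (h i) - coeff n (h' i)) := by
    intro i
    have km := key_mul n hn0 (h 5) (h' 5) (Dq (h i)) (Dq (h' i)) (hag 5)
      (fun k hk => by rw [coeff_Dq, coeff_Dq, hag i k hk])
    rw [km, hcv5]
    have hDq0 : constantCoeff (Dq (h i)) = 0 := by
      rw [← PowerSeries.coeff_zero_eq_constantCoeff_apply, coeff_Dq]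
      simp
    rw [hDq0, coeff_Dq, coeff_Dq]
    ring
  have E0 : -(5*(n:ℂ)) * (coeff n (h 0) - coeff n (h' 0)) = (24) * (coeff n (h 0) - coeff n (h' 0)) + (1/5) * (coeff n (h 3) - coeff n (h' 3)) + (-625) * (coeff n (h 4) - coeff n (h' 4)) := by
    have r := congrArg (fun f => coeff n f) (hs 0)
    have r' := congrArg (fun f => coeff n f) (hs' 0)
    simp only [P, vec7_0] at r r'
    simp only [map_add, map_sub] at r r'
    have l := hl 0
    have hg0 := (numfacts n hn0.ne' (6*5^4 : PowerSeries ℂ) (3750) (3750) (by norm_num) (by norm_num))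
    have m0 := monoA n hn0 (6*5^4 : PowerSeries ℂ) (h 0) (h' 0) (3750) (1/5) 4 5 rfl hg0.1 hg0.2 hcv0 (hag 0)
    have m1 := monoD n hn0 (h 0) (h' 0) (h 3) (h' 3) (1/5) (-6) hcv0 hcv3 (hag 0) (hag 3)
    have hg2 := (numfacts n hn0.ne' (5^4 : PowerSeries ℂ) (625) (625) (by norm_num) (by norm_num))
    have m2 := monoE n hn0 (5^4 : PowerSeries ℂ) (h 4) (h' 4) (625) hg2.1 hg2.2 (hag 4)
    linear_combination r - r' - l + m0 + m1 - m2

  have E1 : -(5*(n:ℂ)) * (coeff n (h 1) - coeff n (h' 1)) = (-3250) * (coeff n (h 0) - coeff n (h' 0)) + (-1) * (coeff n (h 1) - coeff n (h' 1)) + (-25) * (coeff n (h 3) - coeff n (h' 3)) + (78125) * (coeff n (h 4) - coeff n (h' 4)) := by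
    have r := congrArg (fun f => coeff n f) (hs 1)
    have r' := congrArg (fun f => coeff n f) (hs' 1)
    simp only [P, vec7_1] at r r'
    simp only [map_add, map_sub] at r r'
    have l := hl 1
    have hg0 := (numfacts n hn0.ne' (-(5^8) : PowerSeries ℂ) (-390625) (-390625) (by norm_num) (by norm_num))
    have m0 := monoA n hn0 (-(5^8) : PowerSeries ℂ) (h 0) (h' 0) (-390625) (1/5) 5 6 rfl hg0.1 hg0.2 hcv0 (hag 0)
    have hg1 := (numfacts n hn0.ne' (5^5 : PowerSeries ℂ) (3125) (3125) (by norm_num) (by norm_num))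
    have m1 := monoB n hn0 (5^5 : PowerSeries ℂ) (h 0) (h' 0) (h 1) (h' 1) (3125) (1/5) (-25) 3 4 rfl hg1.1 hg1.2 hcv0 hcv1 (hag 0) (hag 1)
    have hg2 := (numfacts n hn0.ne' (5^8 : PowerSeries ℂ) (390625) (390625) (by norm_num) (by norm_num))
    have m2 := monoC n hn0 (5^8 : PowerSeries ℂ) (h 0) (h' 0) (h 4) (h' 4) (390625) (1/5) (0) hg2.1 hg2.2 hcv0 hcv4 (hag 0) (hag 4)
    have m3 := monoD n hn0 (h 1) (h' 1) (h 3) (h' 3) (-25) (-6) hcv1 hcv3 (hag 1) (hag 3)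
    linear_combination r - r' - l + m0 + m1 + m2 + m3

  have E2 : -(5*(n:ℂ)) * (coeff n (h 2) - coeff n (h' 2)) = (-9500) * (coeff n (h 0) - coeff n (h' 0)) + (-1/5) * (coeff n (h 1) - coeff n (h' 1)) + (-2) * (coeff n (h 2) - coeff n (h' 2)) + (-70) * (coeff n (h 3) - coeff n (h' 3)) + (218750) * (coeff n (h 4) - coeff n (h' 4)) := by
    have r := congrArg (fun f => coeff n f) (hs 2)
    have r' := congrArg (fun f => coeff n f) (hs' 2)
    simp only [P, vec7_2] at r r'
    simp only [map_add, map_sub] at r r'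
    have l := hl 2
    have hg0 := (numfacts n hn0.ne' (-(3*5^9) : PowerSeries ℂ) (-5859375) (-5859375) (by norm_num) (by norm_num))
    have m0 := monoA n hn0 (-(3*5^9) : PowerSeries ℂ) (h 0) (h' 0) (-5859375) (1/5) 6 7 rfl hg0.1 hg0.2 hcv0 (hag 0)
    have hg1 := (numfacts n hn0.ne' (5^4 : PowerSeries ℂ) (625) (625) (by norm_num) (by norm_num))
    have m1 := monoB n hn0 (5^4 : PowerSeries ℂ) (h 0) (h' 0) (h 1) (h' 1) (625) (1/5) (-25) 4 5 rfl hg1.1 hg1.2 hcv0 hcv1 (hag 0) (hag 1)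
    have hg2 := (numfacts n hn0.ne' (2*5^5 : PowerSeries ℂ) (6250) (6250) (by norm_num) (by norm_num))
    have m2 := monoB n hn0 (2*5^5 : PowerSeries ℂ) (h 0) (h' 0) (h 2) (h' 2) (6250) (1/5) (-35) 3 4 rfl hg2.1 hg2.2 hcv0 hcv2 (hag 0) (hag 2)
    have hg3 := (numfacts n hn0.ne' (3*5^9 : PowerSeries ℂ) (5859375) (5859375) (by norm_num) (by norm_num))
    have m3 := monoB n hn0 (3*5^9 : PowerSeries ℂ) (h 0) (h' 0) (h 4) (h' 4) (5859375) (1/5) (0) 1 2 rfl hg3.1 hg3.2 hcv0 hcv4 (hag 0) (hag 4)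
    have hg4 := (numfacts n hn0.ne' (5^4 : PowerSeries ℂ) (625) (625) (by norm_num) (by norm_num))
    have m4 := monoC n hn0 (5^4 : PowerSeries ℂ) (h 1) (h' 1) (h 4) (h' 4) (625) (-25) (0) hg4.1 hg4.2 hcv1 hcv4 (hag 1) (hag 4)
    have hg5 := (numfacts n hn0.ne' (2 : PowerSeries ℂ) (2) (2) (by norm_num) (by norm_num))
    have m5 := monoC n hn0 (2 : PowerSeries ℂ) (h 2) (h' 2) (h 3) (h' 3) (2) (-35) (-6) hg5.1 hg5.2 hcv2 hcv3 (hag 2) (hag 3)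
    linear_combination r - r' - l + m0 - m1 + m2 + m3 + m4 + m5

  have E3 : -(5*(n:ℂ)) * (coeff n (h 3) - coeff n (h' 3)) = (-2625) * (coeff n (h 0) - coeff n (h' 0)) + (-1/5) * (coeff n (h 2) - coeff n (h' 2)) + (-21) * (coeff n (h 3) - coeff n (h' 3)) + (56250) * (coeff n (h 4) - coeff n (h' 4)) := by
    have r := congrArg (fun f => coeff n f) (hs 3)
    have r' := congrArg (fun f => coeff n f) (hs' 3)
    simp only [P, vec7_3] at r r'
    simp only [map_add, map_sub] at r r'
    have l := hl 3
    have hg0 := (numfacts n hn0.ne' (-(5^10) : PowerSeries ℂ) (-9765625) (-9765625) (by norm_num) (by norm_num))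
    have m0 := monoA n hn0 (-(5^10) : PowerSeries ℂ) (h 0) (h' 0) (-9765625) (1/5) 7 8 rfl hg0.1 hg0.2 hcv0 (hag 0)
    have hg1 := (numfacts n hn0.ne' (5^4 : PowerSeries ℂ) (625) (625) (by norm_num) (by norm_num))
    have m1 := monoB n hn0 (5^4 : PowerSeries ℂ) (h 0) (h' 0) (h 2) (h' 2) (625) (1/5) (-35) 4 5 rfl hg1.1 hg1.2 hcv0 hcv2 (hag 0) (hag 2)
    have hg2 := (numfacts n hn0.ne' (3*5^5 : PowerSeries ℂ) (9375) (9375) (by norm_num) (by norm_num))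
    have m2 := monoB n hn0 (3*5^5 : PowerSeries ℂ) (h 0) (h' 0) (h 3) (h' 3) (9375) (1/5) (-6) 3 4 rfl hg2.1 hg2.2 hcv0 hcv3 (hag 0) (hag 3)
    have hg3 := (numfacts n hn0.ne' (5^10 : PowerSeries ℂ) (9765625) (9765625) (by norm_num) (by norm_num))
    have m3 := monoB n hn0 (5^10 : PowerSeries ℂ) (h 0) (h' 0) (h 4) (h' 4) (9765625) (1/5) (0) 2 3 rfl hg3.1 hg3.2 hcv0 hcv4 (hag 0) (hag 4)
    have hg4 := (numfacts n hn0.ne' (5^4 : PowerSeries ℂ) (625) (625) (by norm_num) (by norm_num))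
    have m4 := monoC n hn0 (5^4 : PowerSeries ℂ) (h 2) (h' 2) (h 4) (h' 4) (625) (-35) (0) hg4.1 hg4.2 hcv2 hcv4 (hag 2) (hag 4)
    have hg5 := (numfacts n hn0.ne' (3 : PowerSeries ℂ) (3) (3) (by norm_num) (by norm_num))
    have m5 := monoA n hn0 (3 : PowerSeries ℂ) (h 3) (h' 3) (3) (-6) 1 2 rfl hg5.1 hg5.2 hcv3 (hag 3)
    linear_combination r - r' - l + m0 - m1 + m2 + m3 + m4 + m5

  have E4 : -(5*(n:ℂ)) * (coeff n (h 4) - coeff n (h' 4)) = (-5) * (coeff n (h 4) - coeff n (h' 4)) := by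
    have r := congrArg (fun f => coeff n f) (hs 4)
    have r' := congrArg (fun f => coeff n f) (hs' 4)
    simp only [P, vec7_4] at r r'
    simp only [map_add, map_sub] at r r'
    have l := hl 4
    have hg0 := (numfacts n hn0.ne' (5^6 : PowerSeries ℂ) (15625) (15625) (by norm_num) (by norm_num))
    have m0 := monoB n hn0 (5^6 : PowerSeries ℂ) (h 0) (h' 0) (h 4) (h' 4) (15625) (1/5) (0) 3 4 rfl hg0.1 hg0.2 hcv0 hcv4 (hag 0) (hag 4)
    have hg1 := (numfacts n hn0.ne' (5 : PowerSeries ℂ) (5) (5) (by norm_num) (by norm_num))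
    have m1 := monoC n hn0 (5 : PowerSeries ℂ) (h 3) (h' 3) (h 4) (h' 4) (5) (-6) (0) hg1.1 hg1.2 hcv3 hcv4 (hag 3) (hag 4)
    linear_combination r - r' - l + m0 + m1

  have E5 : -(5*(n:ℂ)) * (coeff n (h 5) - coeff n (h' 5)) = (-225) * (coeff n (h 0) - coeff n (h' 0)) + (-2) * (coeff n (h 3) - coeff n (h' 3)) + (-9375) * (coeff n (h 4) - coeff n (h' 4)) + (3) * (coeff n (h 5) - coeff n (h' 5)) + (-1/5) * (coeff n (h 6) - coeff n (h' 6)) := by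
    have r := congrArg (fun f => coeff n f) (hs 5)
    have r' := congrArg (fun f => coeff n f) (hs' 5)
    simp only [P, vec7_5] at r r'
    simp only [map_add, map_sub] at r r'
    have l := hl 5
    have hg0 := (numfacts n hn0.ne' (-(5^4) : PowerSeries ℂ) (-625) (-625) (by norm_num) (by norm_num))
    have m0 := monoB n hn0 (-(5^4) : PowerSeries ℂ) (h 0) (h' 0) (h 6) (h' 6) (-625) (1/5) (-15) 4 5 rfl hg0.1 hg0.2 hcv0 hcv6 (hag 0) (hag 6)
    have hg1 := (numfacts n hn0.ne' (3*5^5 : PowerSeries ℂ) (9375) (9375) (by norm_num) (by norm_num))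
    have m1 := monoB n hn0 (3*5^5 : PowerSeries ℂ) (h 0) (h' 0) (h 5) (h' 5) (9375) (1/5) (-1) 3 4 rfl hg1.1 hg1.2 hcv0 hcv5 (hag 0) (hag 5)
    have hg2 := (numfacts n hn0.ne' (2 : PowerSeries ℂ) (2) (2) (by norm_num) (by norm_num))
    have m2 := monoC n hn0 (2 : PowerSeries ℂ) (h 3) (h' 3) (h 5) (h' 5) (2) (-6) (-1) hg2.1 hg2.2 hcv3 hcv5 (hag 3) (hag 5)
    have hg3 := (numfacts n hn0.ne' (5^4 : PowerSeries ℂ) (625) (625) (by norm_num) (by norm_num))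
    have m3 := monoC n hn0 (5^4 : PowerSeries ℂ) (h 4) (h' 4) (h 6) (h' 6) (625) (0) (-15) hg3.1 hg3.2 hcv4 hcv6 (hag 4) (hag 6)
    linear_combination r - r' - l + m0 + m1 + m2 + m3

  have E6 : -(5*(n:ℂ)) * (coeff n (h 6) - coeff n (h' 6)) = (-4125) * (coeff n (h 0) - coeff n (h' 0)) + (2) * (coeff n (h 2) - coeff n (h' 2)) + (-45) * (coeff n (h 3) - coeff n (h' 3)) + (45) * (coeff n (h 5) - coeff n (h' 5)) + (-3) * (coeff n (h 6) - coeff n (h' 6)) := by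
    have r := congrArg (fun f => coeff n f) (hs 6)
    have r' := congrArg (fun f => coeff n f) (hs' 6)
    simp only [P, vec7_6] at r r'
    simp only [map_add, map_sub] at r r'
    have l := hl 6
    have hg0 := (numfacts n hn0.ne' (3*5^5 : PowerSeries ℂ) (9375) (9375) (by norm_num) (by norm_num))
    have m0 := monoB n hn0 (3*5^5 : PowerSeries ℂ) (h 0) (h' 0) (h 6) (h' 6) (9375) (1/5) (-15) 3 4 rfl hg0.1 hg0.2 hcv0 hcv6 (hag 0) (hag 6)
    have hg1 := (numfacts n hn0.ne' (5^5 : PowerSeries ℂ) (3125) (3125) (by norm_num) (by norm_num))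
    have m1 := monoB n hn0 (5^5 : PowerSeries ℂ) (h 0) (h' 0) (h 5) (h' 5) (3125) (1/5) (-1) 2 3 rfl hg1.1 hg1.2 hcv0 hcv5 (hag 0) (hag 5)
    have hg2 := (numfacts n hn0.ne' (2 : PowerSeries ℂ) (2) (2) (by norm_num) (by norm_num))
    have m2 := monoC n hn0 (2 : PowerSeries ℂ) (h 2) (h' 2) (h 5) (h' 5) (2) (-35) (-1) hg2.1 hg2.2 hcv2 hcv5 (hag 2) (hag 5)
    have hg3 := (numfacts n hn0.ne' (3 : PowerSeries ℂ) (3) (3) (by norm_num) (by norm_num))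
    have m3 := monoC n hn0 (3 : PowerSeries ℂ) (h 3) (h' 3) (h 6) (h' 6) (3) (-6) (-15) hg3.1 hg3.2 hcv3 hcv6 (hag 3) (hag 6)
    linear_combination r - r' - l + m0 - m1 - m2 + m3
  -- assemble the linear system
  have hv : (Mmat + (5*(n:ℂ)) • (1 : Matrix (Fin 7) (Fin 7) ℂ)).mulVec
      (fun j => coeff n (h j) - coeff n (h' j)) = 0 := by
    rw [Matrix.add_mulVec, Matrix.smul_mulVec, Matrix.one_mulVec]
    funext i
    fin_cases i <;>
      simp only [Matrix.mulVec, dotProduct, Fin.sum_univ_seven,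
        Pi.add_apply, Pi.smul_apply, smul_eq_mul, Mmat, Pi.zero_apply,
        vec7_0, vec7_1, vec7_2, vec7_3, vec7_4, vec7_5, vec7_6,
        vec7_0', vec7_1', vec7_2', vec7_3', vec7_4', vec7_5', vec7_6',
        fmk0, fmk1, fmk2, fmk3, fmk4, fmk5, fmk6]
    · linear_combination -E0
    · linear_combination -E1
    · linear_combination -E2
    · linear_combination -E3
    · linear_combination -E4
    · linear_combination -E5
    · linear_combination -E6
  have hu := part1 n hn
  rw [A0_eq] at hu
  obtain ⟨u, hu⟩ := hu
  have hinv : ((↑u⁻¹ : Matrix (Fin 7) (Fin 7) ℂ)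
      * (Mmat + (5*(n:ℂ)) • (1 : Matrix (Fin 7) (Fin 7) ℂ))) = 1 := by
    rw [← hu]; exact u.inv_mul
  have hz : (fun j => coeff n (h j) - coeff n (h' j)) = (0 : Fin 7 → ℂ) := by
    calc (fun j => coeff n (h j) - coeff n (h' j))
        = (1 : Matrix (Fin 7) (Fin 7) ℂ).mulVec (fun j => coeff n (h j) - coeff n (h' j)) := by
          rw [Matrix.one_mulVec]
      _ = ((↑u⁻¹ : Matrix (Fin 7) (Fin 7) ℂ)
            * (Mmat + (5*(n:ℂ)) • (1 : Matrix (Fin 7) (Fin 7) ℂ))).mulVec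
            (fun j => coeff n (h j) - coeff n (h' j)) := by rw [hinv]
      _ = (↑u⁻¹ : Matrix (Fin 7) (Fin 7) ℂ).mulVec
            ((Mmat + (5*(n:ℂ)) • (1 : Matrix (Fin 7) (Fin 7) ℂ)).mulVec
              (fun j => coeff n (h j) - coeff n (h' j))) := by
          rw [← Matrix.mulVec_mulVec]
      _ = 0 := by rw [hv, Matrix.mulVec_zero]
  intro j
  have := congrFun hz j
  simpa [sub_eq_zero] using this

end Aux

theorem stmt19 :
    (∀ n : ℕ, 2 ≤ n →
      IsUnit (A0 + (5*(n : ℂ)) • (1 : Matrix (Fin 7) (Fin 7) ℂ))) ∧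
    (∀ h h' : Fin 7 → PowerSeries ℂ, IsSol h → IsSol h' →
      (∀ i, PowerSeries.coeff 0 (h i) = T0 i) →
      (∀ i, PowerSeries.coeff 1 (h i) = T1 i) →
      (∀ i, PowerSeries.coeff 0 (h' i) = T0 i) →
      (∀ i, PowerSeries.coeff 1 (h' i) = T1 i) →
      h = h') := by
  constructor
  · exact part1
  · intro h h' hs hs' h0 h1 h0' h1'
    have main : ∀ N : ℕ, ∀ j, coeff N (h j) = coeff N (h' j) := by
      intro N
      induction N using Nat.strong_induction_on with
      | _ N ih =>
        match N with
        | 0 => intro j; rw [h0 j, h0' j]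
        | 1 => intro j; rw [h1 j, h1' j]
        | (m+2) =>
          exact step (m+2) (by omega) h h' hs hs' h0 h0'
            (fun j k hk => ih k hk j)
    funext j
    exact PowerSeries.ext fun N => main N j
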